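/- The measure ℙ defined from the family (P_s : s ∈ S) and a strictly positive weight vector π = (π_s : s ∈ S) by ℙ(B) = ∑_{s∈S} π_s ∑_{n≥0} P_s({T > n} ∩ Θ_n^{-1}B) is a probability measure on I^ℕ if and only if ∑_{s∈S} π_s · E_s(T) = 1, where E_s denotes expectation under P_s. Consequently, there exists a strictly positive vector π making ℙ a probability measure if and only if E_s(T) < ∞ for every s ∈ S. -/

import Mathlib

open MeasureTheory Filter
open scoped ENNReal NNReal ENat

variable {I : Type*} [MeasurableSpace I]

/-- The shift map `Θ_q` on sequences: `(Θ_q x) n = x (n + q)`. -/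
def shiftI (q : ℕ) (x : ℕ → I) : ℕ → I := fun n => x (n + q)

/-- The hitting time of a different class:
`T(x) = inf {n > 0 : x n ∈ S \ C(x 0)}` (with `inf ∅ = ∞`), where the class `C(x 0)` is
taken with respect to the equivalence relation `sim`. -/
noncomputable def hitT (S : Finset I) (sim : I → I → Prop) (x : ℕ → I) : ℕ∞ :=
  sInf ((fun n : ℕ => (n : ℕ∞)) '' {n : ℕ | 0 < n ∧ x n ∈ S ∧ ¬ sim (x 0) (x n)})

/-- The expectation `E(T)` of the hitting time `T` under `P`. -/
noncomputable def hitET (S : Finset I) (sim : I → I → Prop) (P : Measure (ℕ → I)) : ℝ≥0∞ :=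
  ∫⁻ x, (hitT S sim x : ℝ≥0∞) ∂P

/-- The measure `ℙ(B) = ∑_{s ∈ S} π_s ∑_{n ≥ 0} P_s({T > n} ∩ Θ_n⁻¹ B)`. -/
noncomputable def lawP (S : Finset I) (sim : I → I → Prop) (π : I → ℝ≥0)
    (P : I → Measure (ℕ → I)) : Measure (ℕ → I) :=
  ∑ s ∈ S, π s •
    Measure.sum (fun n : ℕ => ((P s).restrict {x | (n : ℕ∞) < hitT S sim x}).map (shiftI n))

lemma measurable_shiftI (q : ℕ) : Measurable (shiftI (I := I) q) :=
  measurable_pi_lambda _ fun n => measurable_pi_apply (n + q)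

lemma lt_hitT_iff (S : Finset I) (sim : I → I → Prop) (n : ℕ) (x : ℕ → I) :
    (n : ℕ∞) < hitT S sim x ↔
      ∀ m ≤ n, ¬ (0 < m ∧ x m ∈ S ∧ ¬ sim (x 0) (x m)) := by
  constructor
  · intro h m hm hmem
    have hle : hitT S sim x ≤ (m : ℕ∞) := sInf_le ⟨m, hmem, rfl⟩
    exact absurd (h.trans_le hle) (by exact_mod_cast not_lt.2 hm)
  · intro h
    have h1 : ((n + 1 : ℕ) : ℕ∞) ≤ hitT S sim x := by
      refine le_sInf ?_
      rintro a ⟨m, hm, rfl⟩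
      have hnm : n < m := lt_of_not_ge fun hle => h m hle hm
      show ((n + 1 : ℕ) : ℕ∞) ≤ (m : ℕ∞)
      exact_mod_cast hnm
    exact lt_of_lt_of_le (by exact_mod_cast Nat.lt_succ_self n) h1

lemma measurableSet_lt_hitT [Fintype I] [MeasurableSingletonClass I]
    (S : Finset I) (sim : I → I → Prop) (n : ℕ) :
    MeasurableSet {x : ℕ → I | (n : ℕ∞) < hitT S sim x} := by
  have : {x : ℕ → I | (n : ℕ∞) < hitT S sim x}
      = ⋂ m ∈ Finset.range (n + 1),
          {x : ℕ → I | ¬ (0 < m ∧ x m ∈ S ∧ ¬ sim (x 0) (x m))} := by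
    ext x
    simp [lt_hitT_iff, Nat.lt_succ_iff]
  rw [this]
  refine MeasurableSet.biInter (Set.to_countable _) fun m _ => ?_
  have : {x : ℕ → I | ¬ (0 < m ∧ x m ∈ S ∧ ¬ sim (x 0) (x m))}
      = (fun x : ℕ → I => (x 0, x m)) ⁻¹'
          {p : I × I | ¬ (0 < m ∧ p.2 ∈ S ∧ ¬ sim p.1 p.2)} := rfl
  rw [this]
  exact ((measurable_pi_apply 0).prodMk (measurable_pi_apply m))
    ((Set.toFinite _).measurableSet)

lemma enat_coe_eq_tsum (a : ℕ∞) :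
    (a : ℝ≥0∞) = ∑' n : ℕ, if (n : ℕ∞) < a then 1 else 0 := by
  cases a with
  | top =>
    rw [ENat.toENNReal_top]
    have : ∀ n : ℕ, (if (n : ℕ∞) < (⊤ : ℕ∞) then (1 : ℝ≥0∞) else 0) = 1 := by
      intro n; simp [lt_top_iff_ne_top]
    simp only [this]
    exact (ENNReal.tsum_const_eq_top_of_ne_zero one_ne_zero).symm
  | coe m =>
    rw [ENat.toENNReal_coe]
    have hz : ∀ n ∉ Finset.range m, (if (n : ℕ∞) < (m : ℕ∞) then (1 : ℝ≥0∞) else 0) = 0 := by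
      intro n hn
      simp only [Finset.mem_range, not_lt] at hn
      simp [not_lt.2 (by exact_mod_cast hn : (m : ℕ∞) ≤ n)]
    rw [tsum_eq_sum hz]
    have : ∀ n ∈ Finset.range m, (if (n : ℕ∞) < (m : ℕ∞) then (1 : ℝ≥0∞) else 0) = 1 := by
      intro n hn
      simp only [Finset.mem_range] at hn
      simp [(by exact_mod_cast hn : (n : ℕ∞) < (m : ℕ∞))]
    rw [Finset.sum_congr rfl this]
    simp

lemma one_le_hitT (S : Finset I) (sim : I → I → Prop) (x : ℕ → I) :
    (1 : ℕ∞) ≤ hitT S sim x := by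
  refine le_sInf ?_
  rintro a ⟨m, hm, rfl⟩
  show (1 : ℕ∞) ≤ (m : ℕ∞)
  exact_mod_cast hm.1

lemma hitET_eq_tsum [Fintype I] [MeasurableSingletonClass I]
    (S : Finset I) (sim : I → I → Prop) (μ : Measure (ℕ → I)) :
    hitET S sim μ = ∑' n : ℕ, μ {x | (n : ℕ∞) < hitT S sim x} := by
  unfold hitET
  have h1 : ∀ x, ((hitT S sim x : ℝ≥0∞))
      = ∑' n : ℕ, Set.indicator {x | (n : ℕ∞) < hitT S sim x} (fun _ => 1) x := by
    intro x
    rw [enat_coe_eq_tsum]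
    congr 1
    ext n
    by_cases h : (n : ℕ∞) < hitT S sim x <;> simp [Set.indicator, h]
  simp only [h1]
  rw [lintegral_tsum fun n =>
    ((measurable_const.indicator (measurableSet_lt_hitT S sim n)).aemeasurable)]
  congr 1
  ext n
  rw [lintegral_indicator (measurableSet_lt_hitT S sim n)]
  simp

lemma lawP_univ [Fintype I] [MeasurableSingletonClass I]
    (S : Finset I) (sim : I → I → Prop) (π : I → ℝ≥0) (P : I → Measure (ℕ → I)) :
    lawP S sim π P Set.univ = ∑ s ∈ S, (π s : ℝ≥0∞) * hitET S sim (P s) := by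
  unfold lawP
  rw [Measure.finset_sum_apply]
  refine Finset.sum_congr rfl fun s _ => ?_
  rw [Measure.smul_apply, ENNReal.smul_def, smul_eq_mul]
  congr 1
  rw [Measure.sum_apply _ MeasurableSet.univ, hitET_eq_tsum]
  congr 1
  ext n
  rw [Measure.map_apply (measurable_shiftI n) MeasurableSet.univ, Set.preimage_univ,
    Measure.restrict_apply_univ]

/-- For a fixed strictly positive weight vector `π`, the measure `ℙ` is a probability measure
iff `∑_{s ∈ S} π_s E_s(T) = 1`; consequently there is some strictly positive `π` making `ℙ`
a probability measure iff `E_s(T) < ∞` for every `s ∈ S`. -/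
theorem stmt_0 [Fintype I] [MeasurableSingletonClass I]
    (S : Finset I) (hS : S.Nonempty) (hSc : ∃ i : I, i ∉ S)
    (sim : I → I → Prop) (hsim : Equivalence sim)
    (P : I → Measure (ℕ → I)) (hprob : ∀ s ∈ S, IsProbabilityMeasure (P s))
    (hstart : ∀ s ∈ S, P s {x | x 0 = s} = 1)
    (hTfin : ∀ s ∈ S, P s {x | hitT S sim x < ⊤} = 1) :
    (∀ π : I → ℝ≥0, (∀ s ∈ S, 0 < π s) →
      (IsProbabilityMeasure (lawP S sim π P) ↔
        ∑ s ∈ S, (π s : ℝ≥0∞) * hitET S sim (P s) = 1)) ∧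
    ((∃ π : I → ℝ≥0, (∀ s ∈ S, 0 < π s) ∧ IsProbabilityMeasure (lawP S sim π P)) ↔
      ∀ s ∈ S, hitET S sim (P s) < ⊤) := by
  have key : ∀ π : I → ℝ≥0,
      (IsProbabilityMeasure (lawP S sim π P) ↔
        ∑ s ∈ S, (π s : ℝ≥0∞) * hitET S sim (P s) = 1) := by
    intro π
    constructor
    · intro h
      rw [← lawP_univ S sim π P]
      exact h.measure_univ
    · intro h
      exact ⟨by rw [lawP_univ S sim π P, h]⟩
  have hE1 : ∀ s ∈ S, 1 ≤ hitET S sim (P s) := by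
    intro s hs
    haveI := hprob s hs
    calc (1 : ℝ≥0∞) = ∫⁻ _, 1 ∂(P s) := by simp
    _ ≤ hitET S sim (P s) := by
        refine lintegral_mono fun x => ?_
        simpa using ENat.toENNReal_le.2 (one_le_hitT S sim x)
  refine ⟨fun π _ => key π, ?_⟩
  constructor
  · rintro ⟨π, hπ, hPM⟩ s hs
    have hsum := (key π).1 hPM
    have hle : (π s : ℝ≥0∞) * hitET S sim (P s) ≤ 1 := by
      rw [← hsum]
      exact Finset.single_le_sum (f := fun i => (π i : ℝ≥0∞) * hitET S sim (P i)) (fun i _ => zero_le) hs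
    have hne : (π s : ℝ≥0∞) ≠ 0 := by
      exact_mod_cast (hπ s hs).ne'
    by_contra htop
    rw [not_lt, top_le_iff] at htop
    rw [htop, ENNReal.mul_top hne] at hle
    exact absurd hle (by simp)
  · intro hfin
    classical
    set π : I → ℝ≥0 := fun s =>
      if s ∈ S then ((hitET S sim (P s))⁻¹).toNNReal * (S.card : ℝ≥0)⁻¹ else 1 with hπdef
    have hcard : (S.card : ℝ≥0) ≠ 0 := by
      exact_mod_cast (Finset.card_pos.2 hS).ne'
    refine ⟨π, ?_, (key π).2 ?_⟩
    · intro s hs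
      have hEne : hitET S sim (P s) ≠ ⊤ := (hfin s hs).ne
      have hEnz : hitET S sim (P s) ≠ 0 := fun h => by
        have := hE1 s hs; rw [h] at this; exact absurd this (by simp)
      have h1 : 0 < ((hitET S sim (P s))⁻¹).toNNReal :=
        ENNReal.toNNReal_pos (ENNReal.inv_ne_zero.2 hEne) (by simp [hEnz])
      simp only [hπdef, hs, if_pos]
      exact mul_pos h1 (inv_pos.2 (by exact_mod_cast Finset.card_pos.2 hS))
    · have : ∀ s ∈ S, (π s : ℝ≥0∞) * hitET S sim (P s) = (S.card : ℝ≥0∞)⁻¹ := by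
        intro s hs
        have hEne : hitET S sim (P s) ≠ ⊤ := (hfin s hs).ne
        have hEnz : hitET S sim (P s) ≠ 0 := fun h => by
          have := hE1 s hs; rw [h] at this; exact absurd this (by simp)
        simp only [hπdef, hs, if_pos]
        push_cast
        rw [ENNReal.coe_toNNReal (ENNReal.inv_ne_top.2 hEnz)]
        rw [mul_comm ((hitET S sim (P s))⁻¹), mul_assoc,
          ENNReal.inv_mul_cancel hEnz hEne, mul_one]
        rw [ENNReal.coe_inv hcard]
        simp
      rw [Finset.sum_congr rfl this, Finset.sum_const, nsmul_eq_mul]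
      rw [ENNReal.mul_inv_cancel (by exact_mod_cast hcard) (by simp)]
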